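/- Under the hypotheses of the fill-distance theorem (K symmetric PSD with diagonal Lipschitz constant L on compact Ω contained in a ball of radius R), suppose pivots are chosen by δ-complete pivoting with 0 < δ ≤ 1, i.e., R_{i−1}(zᵢ,zᵢ) ≥ δ‖R_{i−1}‖_∞ at each step. Then ‖Rₙ‖_∞ ≤ 8LR/(δ(n^{1/d} − 1)) for n > 1. -/

import Mathlib

open Metric MeasureTheory Module ENNReal


/-- A kernel `K` on a set `Ω` is symmetric positive semidefinite if it is symmetric on `Ω`
and every finite kernel matrix formed from points of `Ω` is positive semidefinite. -/
def IsPSDKernel {E : Type*} (Ω : Set E) (K : E → E → ℝ) : Prop :=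
  (∀ x ∈ Ω, ∀ y ∈ Ω, K x y = K y x) ∧
  ∀ (n : ℕ) (p : Fin n → E), (∀ i, p i ∈ Ω) →
    ∀ c : Fin n → ℝ, 0 ≤ ∑ i, ∑ j, c i * c j * K (p i) (p j)

/-- One pivoted Cholesky step at pivot `z`. -/
noncomputable def cholStep {E : Type*} (R : E → E → ℝ) (z : E) : E → E → ℝ :=
  fun x y => R x y - R x z * R z y / R z z

/-- The residual of the pivoted Cholesky algorithm after successively pivoting at the
points of the list `zs` (in order). -/
noncomputable def cholResid {E : Type*} (K : E → E → ℝ) (zs : List E) : E → E → ℝ :=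
  zs.foldl cholStep K

lemma psd_diag_nonneg {E : Type*} {Ω : Set E} {S : E → E → ℝ} (hS : IsPSDKernel Ω S)
    {x : E} (hx : x ∈ Ω) : 0 ≤ S x x := by
  simpa using hS.2 1 (fun _ => x) (fun _ => hx) (fun _ => 1)

lemma psd_cs {E : Type*} {Ω : Set E} {S : E → E → ℝ} (hS : IsPSDKernel Ω S)
    {x y : E} (hx : x ∈ Ω) (hy : y ∈ Ω) : S x y ^ 2 ≤ S x x * S y y := by
  have hsym := hS.1 y hy x hx
  have hq : ∀ u : ℝ, 0 ≤ S x x * (u * u) + (2 * S x y) * u + S y y := by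
    intro u
    have h2 := hS.2 2 ![x, y] (by intro i; fin_cases i <;> assumption) ![u, 1]
    simp only [Fin.sum_univ_two, Matrix.cons_val_zero, Matrix.cons_val_one, Matrix.head_cons] at h2
    rw [hsym] at h2
    linarith [h2]
  have := discrim_le_zero hq
  unfold discrim at this
  nlinarith [this]

lemma cholStep_psd {E : Type*} {Ω : Set E} {S : E → E → ℝ} (hS : IsPSDKernel Ω S)
    {z : E} (hz : z ∈ Ω) : IsPSDKernel Ω (cholStep S z) := by
  obtain ⟨hsym, hpsd⟩ := hS
  refine ⟨fun x hx y hy => ?_, fun m p hp cc => ?_⟩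
  · simp only [cholStep]
    rw [hsym x hx y hy, hsym x hx z hz, hsym z hz y hy]; ring
  · by_cases hzz : S z z = 0
    · simpa [cholStep, hzz] using hpsd m p hp cc
    · have hzpos : 0 < S z z := (psd_diag_nonneg ⟨hsym, hpsd⟩ hz).lt_of_ne (Ne.symm hzz)
      set A : ℝ := ∑ i, cc i * S (p i) z with hA
      set tt : ℝ := -A / S z z with htt
      have goal_eq : ∑ i, ∑ j, cc i * cc j * cholStep S z (p i) (p j)
          = (∑ i, ∑ j, cc i * cc j * S (p i) (p j)) - A * A / S z z := by
        have e : ∀ i j : Fin m, cc i * cc j * cholStep S z (p i) (p j)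
            = cc i * cc j * S (p i) (p j)
              - (cc i * S (p i) z) * (cc j * S (p j) z) / S z z := by
          intro i j
          simp only [cholStep]
          rw [hsym z hz (p j) (hp j)]
          ring
        simp only [e, Finset.sum_sub_distrib, ← Finset.sum_div, ← Finset.sum_mul,
          ← Finset.mul_sum]
        rfl
      have hp' : ∀ i : Fin (m + 1), (Fin.snoc p z : Fin (m + 1) → E) i ∈ Ω := by
        intro i
        refine Fin.lastCases ?_ ?_ i
        · simpa using hz
        · intro j; simpa using hp j
      have key := hpsd (m + 1) (Fin.snoc p z : Fin (m + 1) → E) hp' (Fin.snoc cc tt : Fin (m + 1) → ℝ)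
      simp only [Fin.sum_univ_castSucc, Fin.snoc_castSucc, Fin.snoc_last] at key
      have e2 : ∑ i : Fin m, ∑ j : Fin (0 : ℕ).succ, (0:ℝ) = 0 := by simp
      -- rewrite key into usable form
      have eA : ∑ j : Fin m, tt * cc j * S z (p j) = tt * A := by
        rw [hA, Finset.mul_sum]
        refine Finset.sum_congr rfl fun j _ => ?_
        rw [hsym z hz (p j) (hp j)]; ring
      have eB : ∀ i : Fin m, cc i * tt * S (p i) z = tt * (cc i * S (p i) z) := by
        intro i; ring
      rw [Finset.sum_add_distrib] at key
      simp only [eB] at key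
      rw [← Finset.mul_sum, ← hA, eA] at key
      have efin : (∑ i : Fin m, ∑ j : Fin m, cc i * cc j * S (p i) (p j))
          + tt * A + (tt * A + tt * tt * S z z)
          = (∑ i : Fin m, ∑ j : Fin m, cc i * cc j * S (p i) (p j)) - A * A / S z z := by
        rw [htt]; field_simp; ring
      rw [goal_eq, ← efin]
      linarith [key]

lemma cholStep_diag_le {E : Type*} {S : E → E → ℝ} {z x : E}
    (hs : S x z = S z x) (hzz : 0 ≤ S z z) : cholStep S z x x ≤ S x x := by
  simp only [cholStep]
  have h0 : 0 ≤ S x z * S z x / S z z := by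
    apply div_nonneg _ hzz
    rw [hs]; exact mul_self_nonneg _
  linarith

lemma cholStep_D_le {E : Type*} {S : E → E → ℝ} {z x w : E}
    (hxz : S x z = S z x) (hwz : S w z = S z w) (hzz : 0 ≤ S z z) :
    cholStep S z x x - 2 * cholStep S z x w + cholStep S z w w
      ≤ S x x - 2 * S x w + S w w := by
  simp only [cholStep]
  rcases eq_or_lt_of_le hzz with h | h
  · rw [← h]; simp
  · rw [← hxz, ← hwz]
    have h0 : 0 ≤ (S x z - S w z) ^ 2 / S z z := by positivity
    have e : (S x z - S w z) ^ 2 / S z z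
        = S x z * S x z / S z z - 2 * (S x z * S w z / S z z) + S w z * S w z / S z z := by
      field_simp; ring
    linarith [h0, e.symm.le, e.le]

lemma cholStep_diag_le_D {E : Type*} {S : E → E → ℝ} {z x : E}
    (hxz : S x z = S z x) (hzz : 0 < S z z) :
    cholStep S z x x ≤ S x x - 2 * S x z + S z z := by
  simp only [cholStep]
  rw [← hxz]
  have h0 : 0 ≤ (S x z - S z z) ^ 2 / S z z := by positivity
  have e : (S x z - S z z) ^ 2 / S z z
      = S x z * S x z / S z z - 2 * S x z + S z z := by
    field_simp; ring
  linarith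

lemma exists_close_pair {d n : ℕ} (hd : 0 < d) (hn : 1 < n) (c : EuclideanSpace ℝ (Fin d)) {R : ℝ}
    (hR : 0 ≤ R) (z : Fin n → EuclideanSpace ℝ (Fin d)) (hz : ∀ i, z i ∈ Metric.closedBall c R) :
    ∃ i k : Fin n, (i : ℕ) < (k : ℕ) ∧
      dist (z i) (z k) ≤ 4 * R / ((n : ℝ) ^ ((1 : ℝ) / (d : ℝ)) - 1) := by
  have hd' : (d : ℝ) ≠ 0 := Nat.cast_ne_zero.mpr hd.ne'
  have ht : 0 < (n : ℝ) ^ ((1 : ℝ) / (d : ℝ)) - 1 := by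
    have : 1 < (n : ℝ) ^ ((1 : ℝ) / (d : ℝ)) := by
      rw [Real.one_lt_rpow_iff_of_pos (by positivity)]
      exact Or.inl ⟨by exact_mod_cast hn, by positivity⟩
    linarith
  set t : ℝ := (n : ℝ) ^ ((1 : ℝ) / (d : ℝ)) - 1 with htdef
  set h : ℝ := 4 * R / t with hhdef
  have hh0 : 0 ≤ h := by positivity
  by_contra hcon
  push_neg at hcon
  have hfar : ∀ i k : Fin n, i ≠ k → h < dist (z i) (z k) := by
    intro i k hik
    rcases lt_or_gt_of_ne (fun e : (i:ℕ) = (k:ℕ) => hik (Fin.ext e)) with hlt | hlt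
    · exact hcon i k hlt
    · rw [dist_comm]; exact hcon k i hlt
  have hRpos : 0 < R := by
    rcases hR.lt_or_eq with h0 | h0
    · exact h0
    · exfalso
      have i0 : Fin n := ⟨0, by omega⟩
      have i1 : Fin n := ⟨1, by omega⟩
      have e : ∀ i : Fin n, z i = c := by
        intro i
        have := hz i
        rw [Metric.mem_closedBall, ← h0] at this
        exact dist_le_zero.mp this
      have := hfar ⟨0, by omega⟩ ⟨1, by omega⟩ (by simp [Fin.ext_iff])
      rw [e, e, dist_self] at this
      have : h = 0 := by rw [hhdef, ← h0]; ring
      linarith [hfar ⟨0, by omega⟩ ⟨1, by omega⟩ (by simp [Fin.ext_iff]), this]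
  have hhpos : 0 < h := by positivity
  set μ : Measure (EuclideanSpace ℝ (Fin d)) := volume with hμ
  set V : ℝ≥0∞ := μ (ball (0 : EuclideanSpace ℝ (Fin d)) 1) with hV
  have hVpos : V ≠ 0 := (measure_ball_pos μ _ one_pos).ne'
  have hVtop : V ≠ ⊤ := measure_ball_lt_top.ne
  have hfr : finrank ℝ (EuclideanSpace ℝ (Fin d)) = d := finrank_euclideanSpace_fin
  have hdisj : Pairwise (Function.onFun Disjoint fun i : Fin n => closedBall (z i) (h / 2)) := by
    intro i k hik
    exact Metric.closedBall_disjoint_closedBall (by linarith [hfar i k hik])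
  have hsub : (⋃ i, closedBall (z i) (h / 2)) ⊆ closedBall c (R + h / 2) := by
    refine Set.iUnion_subset fun i x hx => ?_
    have h1 := hz i
    rw [Metric.mem_closedBall] at *
    calc dist x c ≤ dist x (z i) + dist (z i) c := dist_triangle _ _ _
      _ ≤ h / 2 + R := add_le_add hx h1
      _ = R + h / 2 := by ring
  have hunion : μ (⋃ i, closedBall (z i) (h / 2)) = ∑ i : Fin n, μ (closedBall (z i) (h / 2)) := by
    rw [measure_iUnion hdisj fun i => measurableSet_closedBall, tsum_fintype]
  have hballvol : ∀ i : Fin n, μ (closedBall (z i) (h / 2))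
      = ENNReal.ofReal ((h / 2) ^ d) * V := by
    intro i
    rw [Measure.addHaar_closedBall μ (z i) (by positivity), hfr]
  have key : (n : ℝ≥0∞) * (ENNReal.ofReal ((h / 2) ^ d) * V)
      ≤ ENNReal.ofReal ((R + h / 2) ^ d) * V := by
    calc (n : ℝ≥0∞) * (ENNReal.ofReal ((h / 2) ^ d) * V)
        = ∑ i : Fin n, μ (closedBall (z i) (h / 2)) := by
          simp [hballvol, Finset.sum_const, nsmul_eq_mul]
      _ = μ (⋃ i, closedBall (z i) (h / 2)) := hunion.symm
      _ ≤ μ (closedBall c (R + h / 2)) := measure_mono hsub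
      _ = ENNReal.ofReal ((R + h / 2) ^ d) * V := by
          rw [Measure.addHaar_closedBall μ c (by positivity), hfr]
  rw [← mul_assoc] at key
  have key2 : (n : ℝ≥0∞) * ENNReal.ofReal ((h / 2) ^ d) ≤ ENNReal.ofReal ((R + h / 2) ^ d) :=
    (ENNReal.mul_le_mul_iff_left hVpos hVtop).mp key
  have key3 : (n : ℝ) * (h / 2) ^ d ≤ (R + h / 2) ^ d := by
    rw [← ENNReal.ofReal_natCast, ← ENNReal.ofReal_mul (by positivity)] at key2
    exact (ENNReal.ofReal_le_ofReal_iff (by positivity)).mp key2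
  have key4 : ((n : ℝ) * (h / 2) ^ d) ^ ((1:ℝ)/d) ≤ ((R + h / 2) ^ d) ^ ((1:ℝ)/d) :=
    Real.rpow_le_rpow (by positivity) key3 (by positivity)
  have el : ((n : ℝ) * (h / 2) ^ d) ^ ((1:ℝ)/d) = (n : ℝ) ^ ((1:ℝ)/d) * (h / 2) := by
    rw [Real.mul_rpow (by positivity) (by positivity), ← Real.rpow_natCast (h/2) d,
      ← Real.rpow_mul (by positivity)]
    rw [mul_one_div, div_self hd', Real.rpow_one]
  have er : ((R + h / 2) ^ d) ^ ((1:ℝ)/d) = R + h / 2 := by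
    rw [← Real.rpow_natCast (R + h/2) d, ← Real.rpow_mul (by positivity),
      mul_one_div, div_self hd', Real.rpow_one]
  rw [el, er] at key4
  have hth : t * h = 4 * R := by
    rw [hhdef]; field_simp
  have hnt : (n : ℝ) ^ ((1:ℝ)/(d:ℝ)) = t + 1 := by rw [htdef]; ring
  rw [hnt] at key4
  clear_value t h
  nlinarith [key4, hth, hRpos, hhpos, ht]
theorem delta_complete_pivoting_convergence {d n : ℕ} (hd : 0 < d) (hn : 1 < n)
    (Ω : Set (EuclideanSpace ℝ (Fin d))) (hΩ : IsCompact Ω) (δ : ℝ) (hδ0 : 0 < δ) (hδ1 : δ ≤ 1)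
    (c : EuclideanSpace ℝ (Fin d)) (R : ℝ) (hball : Ω ⊆ Metric.closedBall c R)
    (K : EuclideanSpace ℝ (Fin d) → EuclideanSpace ℝ (Fin d) → ℝ)
    (hK : IsPSDKernel Ω K) (L : ℝ) (hL : 0 < L)
    (hLip : ∀ x ∈ Ω, ∀ y ∈ Ω, |K x x - K x y| ≤ L * ‖x - y‖)
    (z : Fin n → EuclideanSpace ℝ (Fin d)) (hzΩ : ∀ i, z i ∈ Ω)
    -- well-definedness: each selected pivot has a positive diagonal residual
    (hwd : ∀ k : Fin n,
      0 < cholResid K ((List.ofFn z).take k) (z k) (z k))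
    -- δ-complete pivoting: the diagonal residual at `z k` is at least a δ-fraction of
    -- the sup-norm of the current residual
    (hcp : ∀ k : Fin n, ∀ x ∈ Ω, ∀ y ∈ Ω,
      δ * |cholResid K ((List.ofFn z).take k) x y| ≤
        cholResid K ((List.ofFn z).take k) (z k) (z k)) :
    ∀ x ∈ Ω, ∀ y ∈ Ω,
      |cholResid K (List.ofFn z) x y| ≤
        8 * L * R / (δ * ((n : ℝ) ^ ((1 : ℝ) / (d : ℝ)) - 1)) := by
  intro x hx y hy
  have hd' : (d : ℝ) ≠ 0 := Nat.cast_ne_zero.mpr hd.ne'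
  have ht : 0 < (n : ℝ) ^ ((1 : ℝ) / (d : ℝ)) - 1 := by
    have : 1 < (n : ℝ) ^ ((1 : ℝ) / (d : ℝ)) := by
      rw [Real.one_lt_rpow_iff_of_pos (by positivity)]
      exact Or.inl ⟨by exact_mod_cast hn, by positivity⟩
    linarith
  set t : ℝ := (n : ℝ) ^ ((1 : ℝ) / (d : ℝ)) - 1 with htdef
  have hR0 : 0 ≤ R := le_trans dist_nonneg (hball (hzΩ ⟨0, by omega⟩))
  have hlen : (List.ofFn z).length = n := List.length_ofFn
  set S : ℕ → EuclideanSpace ℝ (Fin d) → EuclideanSpace ℝ (Fin d) → ℝ :=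
    fun k => cholResid K ((List.ofFn z).take k) with hSdef
  have hwd' : ∀ k : Fin n, 0 < S k (z k) (z k) := fun k => hwd k
  have hcp' : ∀ k : Fin n, ∀ u ∈ Ω, ∀ v ∈ Ω, δ * |S k u v| ≤ S k (z k) (z k) :=
    fun k => hcp k
  have hSn : cholResid K (List.ofFn z) = S n := by
    rw [hSdef]
    simp only []
    rw [List.take_of_length_le (le_of_eq hlen)]
  have hS0 : S 0 = K := by rw [hSdef]; simp [cholResid]
  have hstep : ∀ k : ℕ, (hk : k < n) → S (k + 1) = cholStep (S k) (z ⟨k, hk⟩) := by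
    intro k hk
    have htake : (List.ofFn z).take (k + 1) = (List.ofFn z).take k ++ [z ⟨k, hk⟩] := by
      rw [List.take_succ]
      congr
      rw [List.getElem?_ofFn]
      simp [List.ofFnNthVal, hk]
    rw [hSdef]
    simp only [htake, cholResid, List.foldl_append, List.foldl_cons, List.foldl_nil]
  have hpsd : ∀ k, k ≤ n → IsPSDKernel Ω (S k) := by
    intro k
    induction k with
    | zero => intro _; rw [hS0]; exact hK
    | succ m ih =>
      intro hm
      rw [hstep m (by omega)]
      exact cholStep_psd (ih (by omega)) (hzΩ _)
  have hmono : ∀ b, b ≤ n → ∀ a, a ≤ b → ∀ w ∈ Ω, S b w w ≤ S a w w := by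
    intro b
    induction b with
    | zero =>
      intro _ a ha w hw
      have : a = 0 := Nat.le_zero.mp ha
      rw [this]
    | succ m ih =>
      intro hmn a ha w hw
      rcases Nat.eq_or_lt_of_le ha with he | hlt
      · rw [he]
      · have hps := hpsd m (by omega)
        have h1 : S (m + 1) w w ≤ S m w w := by
          rw [hstep m (by omega)]
          exact cholStep_diag_le (hps.1 w hw _ (hzΩ _)) (psd_diag_nonneg hps (hzΩ _))
        exact h1.trans (ih (by omega) a (by omega) w hw)
  have hDmono : ∀ b, b ≤ n → ∀ u ∈ Ω, ∀ w ∈ Ω,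
      S b u u - 2 * S b u w + S b w w ≤ K u u - 2 * K u w + K w w := by
    intro b
    induction b with
    | zero => intro _ u hu w hw; rw [hS0]
    | succ m ih =>
      intro hmn u hu w hw
      have hps := hpsd m (by omega)
      have step := cholStep_D_le (S := S m) (z := z ⟨m, by omega⟩) (x := u) (w := w)
        (hps.1 u hu _ (hzΩ _)) (hps.1 w hw _ (hzΩ _)) (psd_diag_nonneg hps (hzΩ _))
      rw [hstep m (by omega)]
      exact le_trans step (ih (by omega) u hu w hw)
  obtain ⟨i, k, hik, hdist⟩ := exists_close_pair hd hn c hR0 z (fun j => hball (hzΩ j))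
  -- diagonal bound at z k after i+1 steps
  have hzkzi : S (↑i + 1) (z k) (z k) ≤ 2 * L * ‖z k - z i‖ := by
    have h1 : S (↑i + 1) (z k) (z k)
        ≤ S ↑i (z k) (z k) - 2 * S ↑i (z k) (z i) + S ↑i (z i) (z i) := by
      rw [hstep ↑i i.isLt, Fin.eta]
      exact cholStep_diag_le_D ((hpsd ↑i i.isLt.le).1 (z k) (hzΩ k) (z i) (hzΩ i)) (hwd' i)
    have h2 := hDmono ↑i i.isLt.le (z k) (hzΩ k) (z i) (hzΩ i)
    have l1 := hLip (z k) (hzΩ k) (z i) (hzΩ i)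
    have l2 := hLip (z i) (hzΩ i) (z k) (hzΩ k)
    have hs := hK.1 (z k) (hzΩ k) (z i) (hzΩ i)
    rw [norm_sub_rev] at l2
    have a1 := abs_le.mp l1
    have a2 := abs_le.mp l2
    linarith [a1.2, a2.2]
  have hkk : S ↑k (z k) (z k) ≤ 2 * L * ‖z k - z i‖ :=
    le_trans (hmono ↑k k.isLt.le (↑i + 1) (by omega) (z k) (hzΩ k)) hzkzi
  have hnorm : ‖z k - z i‖ ≤ 4 * R / t := by
    rw [← dist_eq_norm, dist_comm]
    exact hdist
  have h5 : S ↑k (z k) (z k) ≤ 8 * L * R / t := by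
    have : 2 * L * ‖z k - z i‖ ≤ 2 * L * (4 * R / t) := by
      apply mul_le_mul_of_nonneg_left hnorm (by positivity)
    calc S ↑k (z k) (z k) ≤ 2 * L * ‖z k - z i‖ := hkk
      _ ≤ 2 * L * (4 * R / t) := this
      _ = 8 * L * R / t := by ring
  have hB : ∀ w ∈ Ω, S n w w ≤ 8 * L * R / (δ * t) := by
    intro w hw
    have hcpk := hcp' k w hw w hw
    have hdw : 0 ≤ S ↑k w w := psd_diag_nonneg (hpsd ↑k k.isLt.le) hw
    rw [abs_of_nonneg hdw] at hcpk
    have h6 : S n w w ≤ S ↑k w w := hmono n le_rfl ↑k k.isLt.le w hw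
    have h7 : δ * S n w w ≤ 8 * L * R / t := by
      calc δ * S n w w ≤ δ * S ↑k w w := by
            exact mul_le_mul_of_nonneg_left h6 hδ0.le
        _ ≤ S ↑k (z k) (z k) := hcpk
        _ ≤ 8 * L * R / t := h5
    rw [le_div_iff₀ (by positivity)]
    calc S n w w * (δ * t) = (δ * S n w w) * t := by ring
      _ ≤ (8 * L * R / t) * t := by
          apply mul_le_mul_of_nonneg_right h7 ht.le
      _ = 8 * L * R := by field_simp
  have hcs := psd_cs (hpsd n le_rfl) hx hy
  have hBx := hB x hx
  have hBy := hB y hy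
  have hdx : 0 ≤ S n x x := psd_diag_nonneg (hpsd n le_rfl) hx
  have hdy : 0 ≤ S n y y := psd_diag_nonneg (hpsd n le_rfl) hy
  have hBnn : 0 ≤ 8 * L * R / (δ * t) := by positivity
  rw [hSn]
  nlinarith [hcs, hBx, hBy, hdx, hdy, hBnn, abs_nonneg (S n x y), sq_abs (S n x y),
    sq_nonneg (|S n x y| + 8 * L * R / (δ * t))]
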